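/- Feuerbach's theorem: the nine-point circle of a triangle is internally tangent to the incircle and externally tangent to each excircle; precisely, |NI| = R/2 − r and |NI_A| = R/2 + r_a, where N is the nine-point center, I the incenter, I_A the excenter opposite A. -/

import Mathlib

open scoped RealInnerProductSpace

noncomputable section

abbrev Pt := EuclideanSpace ℝ (Fin 2)

/-- Signed area of triangle XYZ in the plane. -/
def sArea (X Y Z : Pt) : ℝ :=
  ((Y 0 - X 0) * (Z 1 - X 1) - (Z 0 - X 0) * (Y 1 - X 1)) / 2

/-- Conway symbol: `conwayA A B C = S_A = (b^2 + c^2 - a^2)/2`. -/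
def conwayA (X Y Z : Pt) : ℝ :=
  (dist Z X ^ 2 + dist X Y ^ 2 - dist Y Z ^ 2) / 2

/-- The bilinear form given by the metric matrix K = diag (S_A, S_B, S_C). -/
def Kf (A B C : Pt) (u v : Fin 3 → ℝ) : ℝ :=
  conwayA A B C * u 0 * v 0 + conwayA B C A * u 1 * v 1 + conwayA C A B * u 2 * v 2

/-- The point with (normalized) barycentric coordinates `u` w.r.t. A, B, C. -/
def bary (A B C : Pt) (u : Fin 3 → ℝ) : Pt :=
  u 0 • A + u 1 • B + u 2 • C

lemma dist_sq' (X Y : Pt) : dist X Y ^ 2 = (X 0 - Y 0)^2 + (X 1 - Y 1)^2 := by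
  rw [EuclideanSpace.dist_eq, Real.sq_sqrt (by positivity)]
  simp [Fin.sum_univ_two, Real.dist_eq, sq_abs]

lemma inner_expand' (X Y : Pt) : ⟪X, Y⟫ = X 0 * Y 0 + X 1 * Y 1 := by
  simp [PiLp.inner_apply, RCLike.inner_apply, Fin.sum_univ_two]
  ring

set_option maxHeartbeats 2000000 in
theorem stmt19 (A B C O Hpt : Pt) (h : sArea A B C ≠ 0)
    (hO : dist O A = dist O B ∧ dist O B = dist O C)
    (hH1 : ⟪Hpt - A, C - B⟫ = 0) (hH2 : ⟪Hpt - B, A - C⟫ = 0)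
    (hH3 : ⟪Hpt - C, B - A⟫ = 0)
    (N : Pt) (hN : N = midpoint ℝ O Hpt)
    (a b c S p r ra R : ℝ) (ha : a = dist B C) (hb : b = dist C A)
    (hc : c = dist A B) (hS : S = |sArea A B C|) (hp : p = (a + b + c) / 2)
    (hr : r = S / p) (hra : ra = S / (p - a)) (hR : R = a * b * c / (4 * S))
    (I : Pt) (hI : I = (a + b + c)⁻¹ • (a • A + b • B + c • C))
    (Ia : Pt) (hIa : Ia = (-a + b + c)⁻¹ • ((-a) • A + b • B + c • C)) :
    dist N I = R / 2 - r ∧ dist N Ia = R / 2 + ra := by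
  obtain ⟨hO1, hO2⟩ := hO
  have hsaE : sArea A B C = ((B 0 - A 0) * (C 1 - A 1) - (C 0 - A 0) * (B 1 - A 1)) / 2 := rfl
  have hE : ((B 0 - A 0) * (C 1 - A 1) - (C 0 - A 0) * (B 1 - A 1)) ≠ 0 := by
    intro h0; apply h; rw [hsaE, h0]; norm_num
  -- squared sides
  have ha2 : a^2 = (B 0 - C 0)^2 + (B 1 - C 1)^2 := by rw [ha, dist_sq']
  have hb2 : b^2 = (C 0 - A 0)^2 + (C 1 - A 1)^2 := by rw [hb, dist_sq']
  have hc2 : c^2 = (A 0 - B 0)^2 + (A 1 - B 1)^2 := by rw [hc, dist_sq']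
  have ha0 : 0 ≤ a := ha ▸ dist_nonneg
  have hb0 : 0 ≤ b := hb ▸ dist_nonneg
  have hc0 : 0 ≤ c := hc ▸ dist_nonneg
  have hS2 : S^2 = (((B 0 - A 0) * (C 1 - A 1) - (C 0 - A 0) * (B 1 - A 1)) / 2)^2 := by
    rw [hS, sq_abs, hsaE]
  have hSpos : 0 < S := by rw [hS]; exact abs_pos.mpr h
  -- circumcenter data
  set t := dist O A ^ 2 with ht
  have huu : (A 0 - O 0)^2 + (A 1 - O 1)^2 = t := by rw [ht, dist_sq']; ring
  have hvv : (B 0 - O 0)^2 + (B 1 - O 1)^2 = t := by rw [ht, hO1, dist_sq']; ring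
  have hww : (C 0 - O 0)^2 + (C 1 - O 1)^2 = t := by rw [ht, hO1, hO2, dist_sq']; ring
  have ht0 : 0 ≤ t := ht ▸ (by positivity)
  have huv : (A 0 - O 0)*(B 0 - O 0) + (A 1 - O 1)*(B 1 - O 1) = t - c^2/2 := by
    linear_combination (huu + hvv + hc2)/2
  have hvw : (B 0 - O 0)*(C 0 - O 0) + (B 1 - O 1)*(C 1 - O 1) = t - a^2/2 := by
    linear_combination (hvv + hww + ha2)/2
  have hwu : (C 0 - O 0)*(A 0 - O 0) + (C 1 - O 1)*(A 1 - O 1) = t - b^2/2 := by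
    linear_combination (hww + huu + hb2)/2
  -- orthocenter components
  rw [inner_expand'] at hH1 hH2
  simp only [PiLp.sub_apply] at hH1 hH2
  have f1 : (Hpt 0 - (A 0 + B 0 + C 0 - 2*O 0))*(C 0 - B 0)
      + (Hpt 1 - (A 1 + B 1 + C 1 - 2*O 1))*(C 1 - B 1) = 0 := by
    linear_combination hH1 + hvv - hww
  have f2 : (Hpt 0 - (A 0 + B 0 + C 0 - 2*O 0))*(A 0 - C 0)
      + (Hpt 1 - (A 1 + B 1 + C 1 - 2*O 1))*(A 1 - C 1) = 0 := by
    linear_combination hH2 - huu + hww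
  have hH0 : Hpt 0 = A 0 + B 0 + C 0 - 2*O 0 := by
    have hd : (Hpt 0 - (A 0 + B 0 + C 0 - 2*O 0))
        * ((B 0 - A 0) * (C 1 - A 1) - (C 0 - A 0) * (B 1 - A 1)) = 0 := by
      linear_combination (A 1 - C 1)*f1 - (C 1 - B 1)*f2
    have := (mul_eq_zero.mp hd).resolve_right hE
    linarith only [this]
  have hH1c : Hpt 1 = A 1 + B 1 + C 1 - 2*O 1 := by
    have hd : (Hpt 1 - (A 1 + B 1 + C 1 - 2*O 1))
        * ((B 0 - A 0) * (C 1 - A 1) - (C 0 - A 0) * (B 1 - A 1)) = 0 := by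
      linear_combination (-(A 0 - C 0))*f1 + (C 0 - B 0)*f2
    have := (mul_eq_zero.mp hd).resolve_right hE
    linarith only [this]
  -- nine-point center components
  have hN0 : N 0 = (A 0 + B 0 + C 0 - O 0)/2 := by
    have e : N 0 = 2⁻¹*(O 0 + Hpt 0) := by
      rw [hN, midpoint_eq_smul_add]
      simp only [PiLp.smul_apply, PiLp.add_apply, smul_eq_mul]
      norm_num [invOf_eq_inv]
    rw [e, hH0]; ring
  have hN1 : N 1 = (A 1 + B 1 + C 1 - O 1)/2 := by
    have e : N 1 = 2⁻¹*(O 1 + Hpt 1) := by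
      rw [hN, midpoint_eq_smul_add]
      simp only [PiLp.smul_apply, PiLp.add_apply, smul_eq_mul]
      norm_num [invOf_eq_inv]
    rw [e, hH1c]; ring
  -- Heron
  have heron : 16*S^2 = (a+b+c)*((b+c-a)*((c+a-b)*(a+b-c))) := by
    linear_combination 16*hS2
      - (2*b^2+2*c^2-a^2-((B 0 - C 0)^2 + (B 1 - C 1)^2))*ha2
      - (2*((B 0 - C 0)^2 + (B 1 - C 1)^2)+2*c^2-b^2-((C 0 - A 0)^2 + (C 1 - A 1)^2))*hb2
      - (2*((B 0 - C 0)^2 + (B 1 - C 1)^2)+2*((C 0 - A 0)^2 + (C 1 - A 1)^2)-c^2-((A 0 - B 0)^2 + (A 1 - B 1)^2))*hc2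
  have hs : 0 < a + b + c := by
    rcases (by linarith only [ha0, hb0, hc0] : (0:ℝ) ≤ a+b+c).lt_or_eq with h'|h'
    · exact h'
    · exfalso
      have ha' : a = 0 := by linarith only [h', ha0, hb0, hc0]
      have hb' : b = 0 := by linarith only [h', ha0, hb0, hc0]
      have hc' : c = 0 := by linarith only [h', ha0, hb0, hc0]
      rw [ha', hb', hc'] at heron
      norm_num at heron
      simp only [heron] at hSpos
      exact lt_irrefl 0 hSpos
  have hxyz : 0 < (b+c-a)*((c+a-b)*(a+b-c)) := by
    by_contra hnot
    push_neg at hnot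
    have hle : (a+b+c)*((b+c-a)*((c+a-b)*(a+b-c))) ≤ 0 :=
      mul_nonpos_of_nonneg_of_nonpos hs.le hnot
    have h16 : 0 < 16*S^2 := by positivity
    linarith only [h16, heron, hle]
  have hx : 0 < b + c - a := by
    rcases lt_trichotomy (b+c-a) 0 with h'|h'|h'
    · exfalso
      have hy' : 0 < c + a - b := by linarith only [h', hc0]
      have hz' : 0 < a + b - c := by linarith only [h', hb0]
      have := mul_neg_of_neg_of_pos h' (mul_pos hy' hz')
      linarith only [this, hxyz]
    · exfalso; rw [h', zero_mul] at hxyz; exact lt_irrefl 0 hxyz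
    · exact h'
  have hy : 0 < c + a - b := by
    rcases lt_trichotomy (c+a-b) 0 with h'|h'|h'
    · exfalso
      have hy' : 0 < b + c - a := hx
      have hz' : 0 < a + b - c := by linarith only [h', ha0]
      have h2 := mul_neg_of_neg_of_pos h' hz'
      have := mul_neg_of_pos_of_neg hy' h2
      linarith only [this, hxyz]
    · exfalso; rw [h'] at hxyz; simp at hxyz
    · exact h'
  have hz : 0 < a + b - c := by
    rcases lt_trichotomy (a+b-c) 0 with h'|h'|h'
    · exfalso
      have hy' : 0 < b + c - a := hx
      have hz' : 0 < c + a - b := hy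
      have h2 := mul_neg_of_pos_of_neg hz' h'
      have := mul_neg_of_pos_of_neg hy' h2
      linarith only [this, hxyz]
    · exfalso; rw [h'] at hxyz; simp at hxyz
    · exact h'
  have hapos : 0 < a := by linarith only [hy, hz]
  have hbpos : 0 < b := by linarith only [hx, hz]
  have hcpos : 0 < c := by linarith only [hx, hy]
  -- circumradius relation 16 S^2 t = (abc)^2
  have hP2 : ((A 0 - O 0)*(B 1 - O 1) - (A 1 - O 1)*(B 0 - O 0))^2 = c^2*t - c^4/4 := by
    linear_combination ((B 0 - O 0)^2+(B 1 - O 1)^2)*huu + t*hvv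
      - ((A 0 - O 0)*(B 0 - O 0)+(A 1 - O 1)*(B 1 - O 1) + t - c^2/2)*huv
  have hQ2 : ((B 0 - O 0)*(C 1 - O 1) - (B 1 - O 1)*(C 0 - O 0))^2 = a^2*t - a^4/4 := by
    linear_combination ((C 0 - O 0)^2+(C 1 - O 1)^2)*hvv + t*hww
      - ((B 0 - O 0)*(C 0 - O 0)+(B 1 - O 1)*(C 1 - O 1) + t - a^2/2)*hvw
  have hPQ : ((A 0 - O 0)*(B 1 - O 1) - (A 1 - O 1)*(B 0 - O 0))
      * ((B 0 - O 0)*(C 1 - O 1) - (B 1 - O 1)*(C 0 - O 0))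
      = t*(b^2-a^2-c^2)/2 + a^2*c^2/4 := by
    linear_combination ((B 0 - O 0)*(C 0 - O 0)+(B 1 - O 1)*(C 1 - O 1))*huv
      + (t - c^2/2)*hvw - ((B 0 - O 0)^2+(B 1 - O 1)^2)*hwu - (t - b^2/2)*hvv
  have hkey : t * (16*S^2*t - a^2*b^2*c^2) = 0 := by
    linear_combination (-4*((B 0 - O 0)*(C 1 - O 1) - (B 1 - O 1)*(C 0 - O 0))^2)*hP2
      - 4*(c^2*t - c^4/4)*hQ2
      + 4*(((A 0 - O 0)*(B 1 - O 1) - (A 1 - O 1)*(B 0 - O 0))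
          * ((B 0 - O 0)*(C 1 - O 1) - (B 1 - O 1)*(C 0 - O 0))
          + (t*(b^2-a^2-c^2)/2 + a^2*c^2/4))*hPQ
      + t^2*heron
  have htpos : 0 < t := by
    rcases ht0.lt_or_eq with h'|h'
    · exact h'
    · exfalso
      have hcc : c^2 ≤ 0 := by
        linarith only [h', hc2, huu, hvv, sq_nonneg (A 0 + B 0 - 2*O 0), sq_nonneg (A 1 + B 1 - 2*O 1)]
      linarith only [pow_pos hcpos 2, hcc]
  have hC1 : 16*S^2*t = a^2*b^2*c^2 := by
    rcases mul_eq_zero.mp hkey with h'|h'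
    · exact absurd h' htpos.ne'
    · linarith only [h']
  -- incenter part
  have hsne : (a+b+c) ≠ 0 := ne_of_gt hs
  have hI0 : (a+b+c) * I 0 = a*A 0 + b*B 0 + c*C 0 := by
    rw [hI]; simp only [PiLp.smul_apply, PiLp.add_apply, smul_eq_mul]
    field_simp
  have hI1 : (a+b+c) * I 1 = a*A 1 + b*B 1 + c*C 1 := by
    rw [hI]; simp only [PiLp.smul_apply, PiLp.add_apply, smul_eq_mul]
    field_simp
  have hC2 : ((b+c-a)*(A 0 - O 0) + (c+a-b)*(B 0 - O 0) + (a+b-c)*(C 0 - O 0))^2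
      + ((b+c-a)*(A 1 - O 1) + (c+a-b)*(B 1 - O 1) + (a+b-c)*(C 1 - O 1))^2
      = (a+b+c)^2*t - (a^2*((c+a-b)*(a+b-c)) + b^2*((a+b-c)*(b+c-a)) + c^2*((b+c-a)*(c+a-b))) := by
    linear_combination (b+c-a)^2*huu + (c+a-b)^2*hvv + (a+b-c)^2*hww
      + 2*(b+c-a)*(c+a-b)*huv + 2*(c+a-b)*(a+b-c)*hvw + 2*(a+b-c)*(b+c-a)*hwu
  have hNI0 : 2*(a+b+c)*(N 0 - I 0)
      = (b+c-a)*(A 0 - O 0) + (c+a-b)*(B 0 - O 0) + (a+b-c)*(C 0 - O 0) := by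
    linear_combination 2*(a+b+c)*hN0 - 2*hI0
  have hNI1 : 2*(a+b+c)*(N 1 - I 1)
      = (b+c-a)*(A 1 - O 1) + (c+a-b)*(B 1 - O 1) + (a+b-c)*(C 1 - O 1) := by
    linear_combination 2*(a+b+c)*hN1 - 2*hI1
  have hdNI : dist N I ^ 2 = (N 0 - I 0)^2 + (N 1 - I 1)^2 := dist_sq' N I
  have hD2 : 4*(a+b+c)^2*dist N I^2
      = (a+b+c)^2*t - (a^2*((c+a-b)*(a+b-c)) + b^2*((a+b-c)*(b+c-a)) + c^2*((b+c-a)*(c+a-b))) := by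
    linear_combination 4*(a+b+c)^2*hdNI
      + (2*(a+b+c)*(N 0 - I 0) + ((b+c-a)*(A 0 - O 0) + (c+a-b)*(B 0 - O 0) + (a+b-c)*(C 0 - O 0)))*hNI0
      + (2*(a+b+c)*(N 1 - I 1) + ((b+c-a)*(A 1 - O 1) + (c+a-b)*(B 1 - O 1) + (a+b-c)*(C 1 - O 1)))*hNI1
      + hC2
  have key1 : ((a+b+c)^2*t - (a^2*((c+a-b)*(a+b-c)) + b^2*((a+b-c)*(b+c-a)) + c^2*((b+c-a)*(c+a-b))))*(16*S^2)
      = ((a+b+c)*(a*b*c) - 16*S^2)^2 := by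
    linear_combination (a+b+c)^2*hC1 - 16*S^2*heron
  have habcxyz : (b+c-a)*((c+a-b)*(a+b-c)) ≤ a*(b*c) := by
    linarith only [mul_nonneg hx.le (sq_nonneg (b-c)), mul_nonneg hy.le (sq_nonneg (c-a)),
      mul_nonneg hz.le (sq_nonneg (a-b))]
  have h7 : 0 ≤ (a+b+c)*(a*b*c) - 16*S^2 := by
    linarith only [mul_le_mul_of_nonneg_left habcxyz hs.le, heron]
  have h8 : (8*(a+b+c)*S*dist N I - ((a+b+c)*(a*b*c) - 16*S^2))
      * (8*(a+b+c)*S*dist N I + ((a+b+c)*(a*b*c) - 16*S^2)) = 0 := by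
    linear_combination 16*S^2*hD2 + key1
  have hdnn : 0 ≤ 8*(a+b+c)*S*dist N I := by positivity
  have h9 : 8*(a+b+c)*S*dist N I = (a+b+c)*(a*b*c) - 16*S^2 := by
    rcases mul_eq_zero.mp h8 with h'|h'
    · linarith only [h']
    · linarith only [h', h7, hdnn]
  have hr' : r = 2*S/(a+b+c) := by
    rw [hr, hp, div_div_eq_mul_div]; ring
  have goal1 : dist N I = R / 2 - r := by
    have e : dist N I = ((a+b+c)*(a*b*c) - 16*S^2)/(8*(a+b+c)*S) := by
      rw [eq_div_iff (by positivity)]; linear_combination h9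
    rw [e, hR, hr']
    field_simp
    ring
  -- excenter part
  have hxne : (-a+b+c) ≠ 0 := by intro h0; apply ne_of_gt hx; linarith only [h0]
  have hIa0 : (-a+b+c) * Ia 0 = -a*A 0 + b*B 0 + c*C 0 := by
    rw [hIa]; simp only [PiLp.smul_apply, PiLp.add_apply, smul_eq_mul]
    field_simp
  have hIa1 : (-a+b+c) * Ia 1 = -a*A 1 + b*B 1 + c*C 1 := by
    rw [hIa]; simp only [PiLp.smul_apply, PiLp.add_apply, smul_eq_mul]
    field_simp
  have hC3 : ((a+b+c)*(A 0 - O 0) - (a+b-c)*(B 0 - O 0) - (c+a-b)*(C 0 - O 0))^2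
      + ((a+b+c)*(A 1 - O 1) - (a+b-c)*(B 1 - O 1) - (c+a-b)*(C 1 - O 1))^2
      = (b+c-a)^2*t + ((a+b+c)*((a+b-c)*c^2) + (a+b+c)*((c+a-b)*b^2) - (c+a-b)*((a+b-c)*a^2)) := by
    linear_combination (a+b+c)^2*huu + (a+b-c)^2*hvv + (c+a-b)^2*hww
      - 2*(a+b+c)*(a+b-c)*huv + 2*(a+b-c)*(c+a-b)*hvw - 2*(c+a-b)*(a+b+c)*hwu
  have hM0 : 2*(b+c-a)*(N 0 - Ia 0)
      = (a+b+c)*(A 0 - O 0) - (a+b-c)*(B 0 - O 0) - (c+a-b)*(C 0 - O 0) := by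
    linear_combination 2*(b+c-a)*hN0 - 2*hIa0
  have hM1 : 2*(b+c-a)*(N 1 - Ia 1)
      = (a+b+c)*(A 1 - O 1) - (a+b-c)*(B 1 - O 1) - (c+a-b)*(C 1 - O 1) := by
    linear_combination 2*(b+c-a)*hN1 - 2*hIa1
  have hdNIa : dist N Ia ^ 2 = (N 0 - Ia 0)^2 + (N 1 - Ia 1)^2 := dist_sq' N Ia
  have hD2a : 4*(b+c-a)^2*dist N Ia^2
      = (b+c-a)^2*t + ((a+b+c)*((a+b-c)*c^2) + (a+b+c)*((c+a-b)*b^2) - (c+a-b)*((a+b-c)*a^2)) := by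
    linear_combination 4*(b+c-a)^2*hdNIa
      + (2*(b+c-a)*(N 0 - Ia 0) + ((a+b+c)*(A 0 - O 0) - (a+b-c)*(B 0 - O 0) - (c+a-b)*(C 0 - O 0)))*hM0
      + (2*(b+c-a)*(N 1 - Ia 1) + ((a+b+c)*(A 1 - O 1) - (a+b-c)*(B 1 - O 1) - (c+a-b)*(C 1 - O 1)))*hM1
      + hC3
  have key1a : ((b+c-a)^2*t + ((a+b+c)*((a+b-c)*c^2) + (a+b+c)*((c+a-b)*b^2) - (c+a-b)*((a+b-c)*a^2)))*(16*S^2)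
      = ((b+c-a)*(a*b*c) + 16*S^2)^2 := by
    linear_combination (b+c-a)^2*hC1 - 16*S^2*heron
  have h8a : (8*(b+c-a)*S*dist N Ia - ((b+c-a)*(a*b*c) + 16*S^2))
      * (8*(b+c-a)*S*dist N Ia + ((b+c-a)*(a*b*c) + 16*S^2)) = 0 := by
    linear_combination 16*S^2*hD2a + key1a
  have h9a : 8*(b+c-a)*S*dist N Ia = (b+c-a)*(a*b*c) + 16*S^2 := by
    rcases mul_eq_zero.mp h8a with h'|h'
    · linarith only [h']
    · exfalso
      have hp1 : 0 ≤ 8*(b+c-a)*S*dist N Ia := by positivity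
      have hp2 : 0 < (b+c-a)*(a*b*c) + 16*S^2 := by positivity
      linarith only [h', hp1, hp2]
  have hra' : ra = 2*S/(b+c-a) := by
    rw [hra, hp, show (a+b+c)/2 - a = (b+c-a)/2 by ring, div_div_eq_mul_div]; ring
  have goal2 : dist N Ia = R / 2 + ra := by
    have e : dist N Ia = ((b+c-a)*(a*b*c) + 16*S^2)/(8*(b+c-a)*S) := by
      rw [eq_div_iff (by positivity)]; linear_combination h9a
    rw [e, hR, hra']
    field_simp
    ring
  exact ⟨goal1, goal2⟩
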